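/- There exist a finite chordal graph G (a finite simple graph with no induced cycle of length greater than 3) and a weight function w : V(G) → ℕ such that γ^i_w(G) < γ_w(G); in fact there is such an example with γ^i_w(G) = 4 and γ_w(G) = 5. -/

import Mathlib

open Finset

variable {V : Type*}

/-- The closed neighborhood of a vertex `v`: `{v}` together with its neighbors. -/
def closedNbr [Fintype V] [DecidableEq V] (G : SimpleGraph V) [DecidableRel G.Adj]
    (v : V) : Finset V :=
  insert v (G.neighborFinset v)

/-- `f` `w`-dominates the set `U`: for every `u ∈ U`, the `f`-sum over the closed
neighborhood of `u` is at least `w u`. -/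
def WDominates [Fintype V] [DecidableEq V] (G : SimpleGraph V) [DecidableRel G.Adj]
    (w : V → ℕ) (f : V → ℕ) (U : Set V) : Prop :=
  ∀ u ∈ U, w u ≤ ∑ x ∈ closedNbr G u, f x

/-- The weighted domination number `γ_w(G)`: the minimum size of a `w`-dominating function. -/
noncomputable def gammaW [Fintype V] [DecidableEq V] (G : SimpleGraph V)
    [DecidableRel G.Adj] (w : V → ℕ) : ℕ :=
  sInf {n | ∃ f : V → ℕ, WDominates G w f Set.univ ∧ ∑ v, f v = n}

/-- The weighted independent domination number `γ^i_w(G)`: the maximum, over all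
independent sets `I`, of the minimum size of a function `w`-dominating `I`. -/
noncomputable def gammaIW [Fintype V] [DecidableEq V] (G : SimpleGraph V)
    [DecidableRel G.Adj] (w : V → ℕ) : ℕ :=
  sSup {m | ∃ I : Set V,
    (∀ u ∈ I, ∀ v ∈ I, u ≠ v → ¬ G.Adj u v) ∧
    m = sInf {n | ∃ f : V → ℕ, WDominates G w f I ∧ ∑ v, f v = n}}

/-- A set is dispersed if every two distinct vertices in it are at distance at least 3:
they are non-adjacent and have no common neighbor. -/
def Dispersed (G : SimpleGraph V) (D : Set V) : Prop :=
  ∀ u ∈ D, ∀ v ∈ D, u ≠ v → ¬ G.Adj u v ∧ ∀ x, ¬(G.Adj u x ∧ G.Adj x v)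

/-- `ρ_w(G)`: the maximum total weight of a dispersed set. -/
noncomputable def rhoW [Fintype V] (G : SimpleGraph V) (w : V → ℕ) : ℕ :=
  sSup {m | ∃ D : Finset V, Dispersed G ↑D ∧ ∑ v ∈ D, w v = m}

/-! ### Auxiliary construction: a 3-sun with a pendant vertex -/

private def adjL : List (Fin 7 × Fin 7) :=
  [(0,1),(0,2),(0,3),(1,3),(1,4),(1,5),(3,4),(3,6),(4,5),(4,6)]

private def G7 : SimpleGraph (Fin 7) where
  Adj a b := ((a, b) ∈ adjL ∨ (b, a) ∈ adjL)
  symm := ⟨fun a b h => by revert h; revert a b; decide⟩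
  loopless := ⟨fun a h => by revert h; revert a; decide⟩

private instance instDecG7 : DecidableRel G7.Adj := fun _ _ =>
  inferInstanceAs (Decidable (_ ∨ _))

private def w7 : Fin 7 → ℕ := ![2,0,1,0,0,3,3]

/-! ### General lemmas about cycles -/

private lemma closedNil {W : Type*} {G : SimpleGraph W} {x : W} (r : G.Walk x x)
    (h : r.support.Nodup) : r.length = 0 := by
  cases r with
  | nil => rfl
  | cons h' t =>
    exfalso
    rw [SimpleGraph.Walk.support_cons] at h
    exact (List.nodup_cons.mp h).1 t.end_mem_support

private lemma pathStartEdge {W : Type*} {G : SimpleGraph W} {x y z : W}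
    (p : G.Walk x y) (hp : p.support.Nodup) (he : s(x, z) ∈ p.edges) :
    ∃ (h : G.Adj x z) (r : G.Walk z y), p = SimpleGraph.Walk.cons h r := by
  cases p with
  | nil => simp at he
  | cons h r =>
    rw [SimpleGraph.Walk.edges_cons, List.mem_cons] at he
    rcases he with he | he
    · rcases Sym2.eq_iff.mp he with ⟨-, rfl⟩ | ⟨h1, rfl⟩
      · exact ⟨h, r, rfl⟩
      · exact absurd h1 h.ne
    · exfalso
      rw [SimpleGraph.Walk.support_cons, List.nodup_cons] at hp
      exact hp.1 (SimpleGraph.Walk.fst_mem_support_of_mem_edges r he)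

/-- In an induced cycle of length at least 4, every support vertex has two distinct
non-adjacent neighbours on the cycle. -/
private lemma cycNbrs {W : Type*} [DecidableEq W] {G : SimpleGraph W} {v : W} {c : G.Walk v v}
    (hc : c.IsCycle) (hlen : 3 < c.length)
    (hind : ∀ x ∈ c.support, ∀ y ∈ c.support, G.Adj x y → s(x, y) ∈ c.edges)
    {u : W} (hu : u ∈ c.support) :
    ∃ a b, a ∈ c.support ∧ b ∈ c.support ∧ G.Adj u a ∧ G.Adj u b ∧ a ≠ b ∧ ¬ G.Adj a b := by
  set d := c.rotate u hu with hdef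
  have hdc : d.IsCycle := hc.rotate hu
  have hdlen : d.length = c.length := by
    have h1 := (SimpleGraph.Walk.rotate_darts c u hu).perm.length_eq
    rwa [SimpleGraph.Walk.length_darts, SimpleGraph.Walk.length_darts] at h1
  obtain ⟨x, hadj, q, hd⟩ := SimpleGraph.Walk.not_nil_iff.mp hdc.not_nil
  have hqlen : 3 ≤ q.length := by
    have h2 := hdlen; rw [hd, SimpleGraph.Walk.length_cons] at h2; omega
  have hqnodup : q.support.Nodup := by
    have h1 := ((SimpleGraph.Walk.isCycle_def d).mp hdc).2.2
    rwa [hd, SimpleGraph.Walk.support_cons, List.tail_cons] at h1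
  have hqrevnil : ¬ q.reverse.Nil := by
    rw [SimpleGraph.Walk.not_nil_iff_lt_length, SimpleGraph.Walk.length_reverse]; omega
  obtain ⟨b, hb, r, hr⟩ := SimpleGraph.Walk.not_nil_iff.mp hqrevnil
  have hrlen : 2 ≤ r.length := by
    have h2 := SimpleGraph.Walk.length_reverse q
    rw [hr, SimpleGraph.Walk.length_cons] at h2; omega
  have hur : u ∉ r.support ∧ r.support.Nodup := by
    have h1 : q.reverse.support.Nodup := by
      rw [SimpleGraph.Walk.support_reverse]; exact List.nodup_reverse.mpr hqnodup
    rw [hr, SimpleGraph.Walk.support_cons, List.nodup_cons] at h1; exact h1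
  have hmem : ∀ y, y ∈ q.support → y ∈ c.support := by
    intro y hy
    have h1 : y ∈ d.support.tail := by
      rw [hd, SimpleGraph.Walk.support_cons, List.tail_cons]; exact hy
    have h2 : y ∈ c.support.tail := ((SimpleGraph.Walk.support_rotate c u hu).perm.mem_iff).mp h1
    rw [SimpleGraph.Walk.support_eq_cons c]; exact List.mem_cons_of_mem _ h2
  have hxS : x ∈ c.support := hmem x q.start_mem_support
  have hbq : b ∈ q.support := by
    have h1 : b ∈ q.reverse.support := by
      rw [hr, SimpleGraph.Walk.support_cons]; exact List.mem_cons_of_mem _ r.start_mem_support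
    rwa [SimpleGraph.Walk.support_reverse, List.mem_reverse] at h1
  have hbS : b ∈ c.support := hmem b hbq
  have hxb : x ≠ b := by
    intro h
    subst h
    have h0 := closedNil r hur.2
    omega
  refine ⟨x, b, hxS, hbS, hadj, hb, hxb, ?_⟩
  intro hab
  have he : s(x, b) ∈ c.edges := hind x hxS b hbS hab
  have he' : s(x, b) ∈ d.edges := ((SimpleGraph.Walk.rotate_edges c u hu).perm.mem_iff).mpr he
  rw [hd, SimpleGraph.Walk.edges_cons, List.mem_cons] at he'
  rcases he' with he' | he'
  · rcases Sym2.eq_iff.mp he' with ⟨h1, -⟩ | ⟨-, h2⟩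
    · exact hadj.ne' h1
    · exact hb.ne h2.symm
  · have he2 : s(x, b) ∈ q.reverse.edges := by
      rw [SimpleGraph.Walk.edges_reverse]; exact List.mem_reverse.mpr he'
    rw [hr, SimpleGraph.Walk.edges_cons, List.mem_cons] at he2
    rcases he2 with he2 | he2
    · rcases Sym2.eq_iff.mp he2 with ⟨h1, -⟩ | ⟨h1, -⟩
      · exact hadj.ne' h1
      · exact hxb h1
    · obtain ⟨h', r', hr'⟩ := pathStartEdge r hur.2 (Sym2.eq_swap ▸ he2)
      have hn : r'.support.Nodup := by
        have h3 := hur.2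
        rw [hr', SimpleGraph.Walk.support_cons, List.nodup_cons] at h3
        exact h3.2
      have h0 := closedNil r' hn
      rw [hr', SimpleGraph.Walk.length_cons] at hrlen
      omega

/-- `G7` has no induced cycle of length greater than 3. -/
private lemma G7_chordal :
    ¬ ∃ (v : Fin 7) (c : G7.Walk v v), c.IsCycle ∧ 3 < c.length ∧
      ∀ x ∈ c.support, ∀ y ∈ c.support, G7.Adj x y → s(x, y) ∈ c.edges := by
  rintro ⟨v, c, hc, hlen, hind⟩
  have key := fun u (hu : u ∈ c.support) => cycNbrs hc hlen hind hu
  have h2 : (2 : Fin 7) ∉ c.support := by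
    intro hm
    obtain ⟨a, b, -, -, ha, hb, hne, hnab⟩ := key 2 hm
    exact (by decide : ∀ a b : Fin 7, G7.Adj 2 a → G7.Adj 2 b → a ≠ b → ¬G7.Adj a b → False)
      a b ha hb hne hnab
  have h0 : (0 : Fin 7) ∉ c.support := by
    intro hm
    obtain ⟨a, b, haS, hbS, ha, hb, hne, hnab⟩ := key 0 hm
    have ha2 : a ≠ 2 := fun h => h2 (h ▸ haS)
    have hb2 : b ≠ 2 := fun h => h2 (h ▸ hbS)
    exact (by decide : ∀ a b : Fin 7, G7.Adj 0 a → G7.Adj 0 b → a ≠ b → ¬G7.Adj a b →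
      a ≠ 2 → b ≠ 2 → False) a b ha hb hne hnab ha2 hb2
  have h5 : (5 : Fin 7) ∉ c.support := by
    intro hm
    obtain ⟨a, b, -, -, ha, hb, hne, hnab⟩ := key 5 hm
    exact (by decide : ∀ a b : Fin 7, G7.Adj 5 a → G7.Adj 5 b → a ≠ b → ¬G7.Adj a b → False)
      a b ha hb hne hnab
  have h6 : (6 : Fin 7) ∉ c.support := by
    intro hm
    obtain ⟨a, b, -, -, ha, hb, hne, hnab⟩ := key 6 hm
    exact (by decide : ∀ a b : Fin 7, G7.Adj 6 a → G7.Adj 6 b → a ≠ b → ¬G7.Adj a b → False)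
      a b ha hb hne hnab
  -- so the support lies in {1,3,4}, but the support tail has ≥ 4 distinct vertices
  have hsub : c.support.tail.toFinset ⊆ ({1, 3, 4} : Finset (Fin 7)) := by
    intro y hy
    have hyS : y ∈ c.support := List.mem_of_mem_tail (List.mem_toFinset.mp hy)
    have e0 : y ≠ 0 := fun h => h0 (h ▸ hyS)
    have e2 : y ≠ 2 := fun h => h2 (h ▸ hyS)
    have e5 : y ≠ 5 := fun h => h5 (h ▸ hyS)
    have e6 : y ≠ 6 := fun h => h6 (h ▸ hyS)
    exact (by decide : ∀ y : Fin 7, y ≠ 0 → y ≠ 2 → y ≠ 5 → y ≠ 6 →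
      y ∈ ({1, 3, 4} : Finset (Fin 7))) y e0 e2 e5 e6
  have hnodup : c.support.tail.Nodup := ((SimpleGraph.Walk.isCycle_def c).mp hc).2.2
  have hlen2 : c.support.tail.length = c.length := by
    have := SimpleGraph.Walk.length_support c
    rw [List.length_tail, this]; omega
  have hcard : c.support.tail.toFinset.card = c.length := by
    rw [List.toFinset_card_of_nodup hnodup, hlen2]
  have := Finset.card_le_card hsub
  rw [hcard] at this
  have h3 : ({1, 3, 4} : Finset (Fin 7)).card = 3 := by decide
  omega

/-! ### Sum expansion lemmas -/

private lemma sumN0 (f : Fin 7 → ℕ) : ∑ x ∈ closedNbr G7 0, f x = f 0 + f 1 + f 2 + f 3 := by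
  rw [show closedNbr G7 0 = {0, 1, 2, 3} from by decide]
  rw [Finset.sum_insert (by decide), Finset.sum_insert (by decide),
    Finset.sum_insert (by decide), Finset.sum_singleton]
  ring

private lemma sumN2 (f : Fin 7 → ℕ) : ∑ x ∈ closedNbr G7 2, f x = f 0 + f 2 := by
  rw [show closedNbr G7 2 = {0, 2} from by decide]
  rw [Finset.sum_insert (by decide), Finset.sum_singleton]

private lemma sumN5 (f : Fin 7 → ℕ) : ∑ x ∈ closedNbr G7 5, f x = f 1 + f 4 + f 5 := by
  rw [show closedNbr G7 5 = {1, 4, 5} from by decide]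
  rw [Finset.sum_insert (by decide), Finset.sum_insert (by decide), Finset.sum_singleton]
  ring

private lemma sumN6 (f : Fin 7 → ℕ) : ∑ x ∈ closedNbr G7 6, f x = f 3 + f 4 + f 6 := by
  rw [show closedNbr G7 6 = {3, 4, 6} from by decide]
  rw [Finset.sum_insert (by decide), Finset.sum_insert (by decide), Finset.sum_singleton]
  ring

/-! ### The two domination numbers -/

private lemma gammaW_G7 : gammaW G7 w7 = 5 := by
  apply le_antisymm
  · apply Nat.sInf_le
    refine ⟨![2, 0, 0, 0, 3, 0, 0], ?_, by decide⟩
    intro u _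
    exact (by decide : ∀ u : Fin 7,
      w7 u ≤ ∑ x ∈ closedNbr G7 u, ![2, 0, 0, 0, 3, 0, 0] x) u
  · have hw : {n | ∃ f : Fin 7 → ℕ, WDominates G7 w7 f Set.univ ∧ ∑ v, f v = n}.Nonempty := by
      refine ⟨5, ![2, 0, 0, 0, 3, 0, 0], ?_, by decide⟩
      intro u _
      exact (by decide : ∀ u : Fin 7,
        w7 u ≤ ∑ x ∈ closedNbr G7 u, ![2, 0, 0, 0, 3, 0, 0] x) u
    apply le_csInf hw
    rintro n ⟨f, hdom, hsum⟩
    have c0 := hdom 0 trivial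
    have c2 := hdom 2 trivial
    have c5 := hdom 5 trivial
    have c6 := hdom 6 trivial
    rw [sumN0] at c0
    rw [sumN2] at c2
    rw [sumN5] at c5
    rw [sumN6] at c6
    have e0 : w7 0 = 2 := rfl
    have e2 : w7 2 = 1 := rfl
    have e5 : w7 5 = 3 := rfl
    have e6 : w7 6 = 3 := rfl
    rw [e0] at c0; rw [e2] at c2; rw [e5] at c5; rw [e6] at c6
    rw [Fin.sum_univ_seven] at hsum
    omega

private lemma gammaIW_G7 : gammaIW G7 w7 = 4 := by
  have hub : ∀ m ∈ {m | ∃ I : Set (Fin 7),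
      (∀ u ∈ I, ∀ v ∈ I, u ≠ v → ¬ G7.Adj u v) ∧
      m = sInf {n | ∃ f : Fin 7 → ℕ, WDominates G7 w7 f I ∧ ∑ v, f v = n}}, m ≤ 4 := by
    rintro m ⟨I, hI, rfl⟩
    by_cases h0 : (0 : Fin 7) ∈ I
    · have h2 : (2 : Fin 7) ∉ I := fun h2 =>
        hI 0 h0 2 h2 (by decide) (by decide)
      have : sInf {n | ∃ f : Fin 7 → ℕ, WDominates G7 w7 f I ∧ ∑ v, f v = n} ≤ 4 := by
        apply Nat.sInf_le
        refine ⟨![0, 1, 0, 1, 2, 0, 0], ?_, by decide⟩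
        intro u hu
        have hne : u ≠ 2 := fun h => h2 (h ▸ hu)
        exact (by decide : ∀ u : Fin 7, u ≠ 2 →
          w7 u ≤ ∑ x ∈ closedNbr G7 u, ![0, 1, 0, 1, 2, 0, 0] x) u hne
      exact this
    · have : sInf {n | ∃ f : Fin 7 → ℕ, WDominates G7 w7 f I ∧ ∑ v, f v = n} ≤ 4 := by
        apply Nat.sInf_le
        refine ⟨![1, 0, 0, 0, 3, 0, 0], ?_, by decide⟩
        intro u hu
        have hne : u ≠ 0 := fun h => h0 (h ▸ hu)
        exact (by decide : ∀ u : Fin 7, u ≠ 0 →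
          w7 u ≤ ∑ x ∈ closedNbr G7 u, ![1, 0, 0, 0, 3, 0, 0] x) u hne
      exact this
  have hmem : (4 : ℕ) ∈ {m | ∃ I : Set (Fin 7),
      (∀ u ∈ I, ∀ v ∈ I, u ≠ v → ¬ G7.Adj u v) ∧
      m = sInf {n | ∃ f : Fin 7 → ℕ, WDominates G7 w7 f I ∧ ∑ v, f v = n}} := by
    refine ⟨{2, 5, 6}, ?_, ?_⟩
    · intro u hu v hv huv
      simp only [Set.mem_insert_iff, Set.mem_singleton_iff] at hu hv
      rcases hu with rfl | rfl | rfl <;> rcases hv with rfl | rfl | rfl <;>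
        first | exact absurd rfl huv | decide
    · symm
      apply le_antisymm
      · apply Nat.sInf_le
        refine ⟨![1, 0, 0, 0, 3, 0, 0], ?_, by decide⟩
        intro u hu
        simp only [Set.mem_insert_iff, Set.mem_singleton_iff] at hu
        rcases hu with rfl | rfl | rfl <;> decide
      · have hw : ∃ n, (∃ f : Fin 7 → ℕ,
            WDominates G7 w7 f ({2, 5, 6} : Set (Fin 7)) ∧ ∑ v, f v = n) := by
          refine ⟨4, ![1, 0, 0, 0, 3, 0, 0], ?_, by decide⟩
          intro u hu
          simp only [Set.mem_insert_iff, Set.mem_singleton_iff] at hu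
          rcases hu with rfl | rfl | rfl <;> decide
        apply le_csInf hw
        rintro n ⟨f, hdom, hsum⟩
        have c2 := hdom 2 (by simp)
        have c5 := hdom 5 (by simp)
        have c6 := hdom 6 (by simp)
        rw [sumN2] at c2
        rw [sumN5] at c5
        rw [sumN6] at c6
        have e2 : w7 2 = 1 := rfl
        have e5 : w7 5 = 3 := rfl
        have e6 : w7 6 = 3 := rfl
        rw [e2] at c2; rw [e5] at c5; rw [e6] at c6
        rw [Fin.sum_univ_seven] at hsum
        omega
  unfold gammaIW
  apply le_antisymm
  · exact csSup_le ⟨4, hmem⟩ hub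
  · exact le_csSup ⟨4, hub⟩ hmem

/-- There is a finite chordal graph (no induced cycle of length greater than 3)
and a weight function with `γ^i_w(G) < γ_w(G)`; in fact with `γ^i_w(G) = 4`
and `γ_w(G) = 5`. -/
theorem exists_chordal_gammaI_lt_gamma :
    ∃ (V : Type) (instF : Fintype V) (instE : DecidableEq V) (G : SimpleGraph V)
      (instD : DecidableRel G.Adj) (w : V → ℕ),
      (¬ ∃ (v : V) (c : G.Walk v v), c.IsCycle ∧ 3 < c.length ∧
        ∀ x ∈ c.support, ∀ y ∈ c.support, G.Adj x y → s(x, y) ∈ c.edges) ∧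
      @gammaIW V instF instE G instD w < @gammaW V instF instE G instD w ∧
      @gammaIW V instF instE G instD w = 4 ∧ @gammaW V instF instE G instD w = 5 := by
  refine ⟨Fin 7, inferInstance, inferInstance, G7, instDecG7, w7, G7_chordal, ?_, ?_, ?_⟩
  · rw [gammaIW_G7, gammaW_G7]; omega
  · exact gammaIW_G7
  · exact gammaW_G7
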